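/- The determinant of the n×n matrix with (i,j)-entry C(2j+i, 2j−i) equals ∏_{i=0}^{n-1} (i!)^2·(4i)! / ((2i)!)^3. -/

import Mathlib

set_option maxHeartbeats 2000000

open Finset

private lemma fq (n : ℕ) : ((n.factorial : ℚ)) ≠ 0 := by
  exact_mod_cast n.factorial_ne_zero

private lemma cc (a b c : ℕ) (h : a = b + c) :
    ((a.choose b : ℚ)) = a.factorial / (b.factorial * c.factorial) := by
  subst h; rw [Nat.cast_choose ℚ (Nat.le_add_right b c), Nat.add_sub_cancel_left]

private lemma fs (n : ℕ) : ((n+1).factorial : ℚ) = (n+1) * n.factorial := by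
  rw [Nat.factorial_succ]; push_cast; ring

private lemma fs1 (a b : ℕ) (h : a = b+1) : ((a.factorial : ℚ)) = a * b.factorial := by
  subst h; rw [fs]; push_cast; ring

private lemma fs2 (a b : ℕ) (h : a = b+2) :
    ((a.factorial : ℚ)) = a * (b+1) * b.factorial := by
  subst h
  rw [show b+2 = (b+1)+1 by ring, fs, fs]; push_cast; ring

/-- The summand of the key identity. -/
private def Tq (i j k : ℕ) : ℚ :=
  (i.choose k : ℚ) * ((2*k).choose i : ℚ) * ((j+k).choose (2*k) : ℚ)
    * ((2*j+2*k).choose (j+k) : ℚ)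

/-- The telescoping certificate. -/
private def Hq (i j k : ℕ) : ℚ :=
  -(((i:ℚ)+1) * ((i:ℚ)+2)) * (i.choose (k-1) : ℚ) * ((2*k).choose (i+2) : ℚ)
    * ((j+k).choose (2*k) : ℚ) * ((2*j+2*k).choose (j+k) : ℚ)

private lemma tq_zero (i j k : ℕ) (h : i < k) : Tq i j k = 0 := by
  simp [Tq, Nat.choose_eq_zero_of_lt h]

private lemma cert (i j k : ℕ) :
    ((i:ℚ)+1)^2 * Tq (i+1) j k - (2*(j:ℚ)+(i:ℚ)+1) * (2*(j:ℚ)-(i:ℚ)) * Tq i j k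
      = Hq i j (k+1) - Hq i j k := by
  by_cases hA : i+1 < k
  · -- all four terms vanish
    simp only [Tq, Hq, Nat.add_sub_cancel]
    rw [Nat.choose_eq_zero_of_lt (show i+1 < k by omega),
        Nat.choose_eq_zero_of_lt (show i < k by omega),
        Nat.choose_eq_zero_of_lt (show i < k-1 by omega)]
    push_cast; ring
  by_cases hB : k = i+1
  · -- case k = i+1 : two-term identity with common tail
    subst hB
    simp only [Tq, Hq, Nat.add_sub_cancel]
    rw [Nat.choose_eq_zero_of_lt (show i < i+1 by omega)]
    rw [Nat.choose_self (i+1), Nat.choose_self i]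
    have h1 : ((i:ℚ)+1) * ((2*(i+1)).choose (i+1) : ℚ)
        = ((i:ℚ)+2) * ((2*(i+1)).choose (i+2) : ℚ) := by
      rw [cc (2*(i+1)) (i+1) (i+1) (by ring), cc (2*(i+1)) (i+2) i (by ring)]
      field_simp [fq]
      rw [fs2 (i+2) i (by ring), fs1 (i+1) i (by ring)]
      push_cast; ring
    push_cast
    linear_combination (((i:ℚ)+1) * ((j+(i+1)).choose (2*(i+1)) : ℚ)
      * ((2*j+2*(i+1)).choose (j+(i+1)) : ℚ)) * h1
  -- now k ≤ i
  by_cases hC : j < k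
  · -- tails vanish
    simp only [Tq, Hq, Nat.add_sub_cancel]
    rw [Nat.choose_eq_zero_of_lt (show j+k < 2*k by omega),
        Nat.choose_eq_zero_of_lt (show j+(k+1) < 2*(k+1) by omega)]
    push_cast; ring
  by_cases hD : 2*k < i
  · -- middle chooses vanish
    simp only [Tq, Hq, Nat.add_sub_cancel]
    rw [Nat.choose_eq_zero_of_lt (show 2*k < i+1 by omega),
        Nat.choose_eq_zero_of_lt (show 2*k < i by omega),
        Nat.choose_eq_zero_of_lt (show 2*(k+1) < i+2 by omega),
        Nat.choose_eq_zero_of_lt (show 2*k < i+2 by omega)]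
    push_cast; ring
  by_cases hE : i = 2*k
  · subst hE
    by_cases hF : j = k
    · subst hF
      simp only [Tq, Hq, Nat.add_sub_cancel]
      rw [Nat.choose_eq_zero_of_lt (show 2*j < 2*j+1 by omega),
          Nat.choose_eq_zero_of_lt (show j+(j+1) < 2*(j+1) by omega),
          Nat.choose_eq_zero_of_lt (show 2*j < 2*j+2 by omega)]
      push_cast; ring
    · -- C4c : i = 2k, k < j
      simp only [Tq, Hq, Nat.add_sub_cancel]
      rw [Nat.choose_eq_zero_of_lt (show 2*k < 2*k+1 by omega),
          Nat.choose_eq_zero_of_lt (show 2*k < 2*k+2 by omega),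
          Nat.choose_self (2*k)]
      rw [show 2*(k+1) = 2*k+2 by ring, show j+(k+1) = j+k+1 by ring,
          show 2*j+(2*k+2) = 2*j+2*k+2 by ring]
      rw [Nat.choose_self (2*k+2)]
      rw [cc (2*k) k k (by ring),
          cc (j+k) (2*k) (j-k) (by omega),
          cc (2*j+2*k) (j+k) (j+k) (by omega),
          cc (j+k+1) (2*k+2) (j-k-1) (by omega),
          cc (2*j+2*k+2) (j+k+1) (j+k+1) (by omega)]
      field_simp [fq]
      rw [fs1 (j-k) (j-k-1) (by omega),
          fs1 (j+k+1) (j+k) (by ring),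
          fs2 (2*j+2*k+2) (2*j+2*k) (by ring),
          fs2 (2*k+2) (2*k) (by ring)]
      push_cast [Nat.cast_sub (show k ≤ j by omega),
        Nat.cast_sub (show 1 ≤ j-k by omega)]
      ring
  by_cases hG : i+1 = 2*k
  · -- C5 : i = 2c+1, k = c+1
    obtain ⟨c, rfl, rfl⟩ : ∃ c, k = c+1 ∧ i = 2*c+1 := ⟨k-1, by omega, by omega⟩
    by_cases hF : j = c+1
    · -- C5b : k = j
      subst hF
      simp only [Tq, Hq, Nat.add_sub_cancel]
      rw [Nat.choose_eq_zero_of_lt (show (c+1)+((c+1)+1) < 2*((c+1)+1) by omega),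
          Nat.choose_eq_zero_of_lt (show 2*(c+1) < 2*c+1+2 by omega)]
      rw [show 2*c+1+1 = 2*c+2 by ring, show 2*(c+1) = 2*c+2 by ring,
          show (c+1)+(c+1) = 2*c+2 by ring]
      rw [show (2*c+2)+(2*c+2) = 4*c+4 by ring]
      rw [Nat.choose_self (2*c+2)]
      rw [cc (2*c+2) (c+1) (c+1) (by ring),
          cc (2*c+1) (c+1) c (by ring),
          cc (2*c+2) (2*c+1) 1 (by ring)]
      field_simp [fq]
      rw [fs1 (2*c+2) (2*c+1) (by ring), fs1 (c+1) c (by ring)]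
      try simp only [Nat.factorial_one]
      push_cast
      ring
    · -- C5c : k = c+1 < j
      have hkj : c+2 ≤ j := by omega
      simp only [Tq, Hq, Nat.add_sub_cancel]
      rw [Nat.choose_eq_zero_of_lt (show 2*(c+1) < 2*c+1+2 by omega)]
      rw [show 2*c+1+1 = 2*c+2 by ring, show 2*(c+1) = 2*c+2 by ring,
          show j+(c+1) = j+c+1 by ring, show 2*j+(2*c+2) = 2*j+2*c+2 by ring,
          show 2*((c+1)+1) = 2*c+4 by ring, show 2*c+1+2 = 2*c+3 by ring,
          show j+((c+1)+1) = j+c+2 by ring, show 2*j+(2*c+4) = 2*j+2*c+4 by ring]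
      rw [Nat.choose_self (2*c+2)]
      rw [cc (2*c+2) (c+1) (c+1) (by ring),
          cc (2*c+1) (c+1) c (by ring),
          cc (2*c+2) (2*c+1) 1 (by ring),
          cc (j+c+1) (2*c+2) (j-c-1) (by omega),
          cc (2*j+2*c+2) (j+c+1) (j+c+1) (by omega),
          cc (2*c+4) (2*c+3) 1 (by ring),
          cc (j+c+2) (2*c+4) (j-c-2) (by omega),
          cc (2*j+2*c+4) (j+c+2) (j+c+2) (by omega)]
      field_simp [fq]
      simp only [fs1 (2*c+4) (2*c+3) (by ring), fs1 (2*c+3) (2*c+2) (by ring),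
          fs1 (2*c+2) (2*c+1) (by ring), fs1 (c+1) c (by ring),
          fs1 (j-c-1) (j-c-2) (by omega),
          fs1 (j+c+2) (j+c+1) (by ring),
          fs2 (2*j+2*c+4) (2*j+2*c+2) (by ring)]
      try simp only [Nat.factorial_one]
      push_cast [Nat.cast_sub (show c ≤ j by omega),
        Nat.cast_sub (show 1 ≤ j-c by omega),
        Nat.cast_sub (show 2 ≤ j-c by omega)]
      ring
  · -- C6 : i+2 ≤ 2*k, k ≤ i, k ≤ j
    have hki : k ≤ i := by omega
    have h2k : i+2 ≤ 2*k := by omega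
    by_cases hF : j = k
    · -- C6b (after subst, k is replaced by j)
      subst hF
      simp only [Tq, Hq, Nat.add_sub_cancel]
      rw [Nat.choose_eq_zero_of_lt (show j+(j+1) < 2*(j+1) by omega)]
      rw [show j+j = 2*j by ring, Nat.choose_self (2*j),
          show 2*j+2*j = 4*j by ring]
      rw [cc (i+1) j (i-j+1) (by omega),
          cc (2*j) (i+1) (2*j-i-1) (by omega),
          cc (4*j) (2*j) (2*j) (by ring),
          cc i j (i-j) (by omega),
          cc (2*j) i (2*j-i) (by omega),
          cc i (j-1) (i-j+1) (by omega),
          cc (2*j) (i+2) (2*j-i-2) (by omega)]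
      field_simp [fq]
      simp only [fs1 (i+1) i (by ring),
          fs2 (i+2) i (by ring),
          fs1 (i-j+1) (i-j) (by ring),
          fs1 (2*j-i) (2*j-i-1) (by omega),
          fs1 (2*j-i-1) (2*j-i-2) (by omega),
          fs1 j (j-1) (by omega)]
      push_cast [Nat.cast_sub (show j ≤ i by omega),
        Nat.cast_sub (show i ≤ 2*j by omega),
        Nat.cast_sub (show 1 ≤ 2*j-i by omega),
        Nat.cast_sub (show 2 ≤ 2*j-i by omega),
        Nat.cast_sub (show 1 ≤ j by omega)]
      ring
    · -- C6c : the generic four-term case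
      have hkj : k+1 ≤ j := by omega
      simp only [Tq, Hq, Nat.add_sub_cancel]
      rw [show 2*(k+1) = 2*k+2 by ring, show j+(k+1) = j+k+1 by ring,
          show 2*j+(2*k+2) = 2*j+2*k+2 by ring]
      rw [cc (i+1) k (i-k+1) (by omega),
          cc (2*k) (i+1) (2*k-i-1) (by omega),
          cc (j+k) (2*k) (j-k) (by omega),
          cc (2*j+2*k) (j+k) (j+k) (by omega),
          cc i k (i-k) (by omega),
          cc (2*k) i (2*k-i) (by omega),
          cc (2*k+2) (i+2) (2*k-i) (by omega),
          cc (j+k+1) (2*k+2) (j-k-1) (by omega),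
          cc (2*j+2*k+2) (j+k+1) (j+k+1) (by omega),
          cc i (k-1) (i-k+1) (by omega),
          cc (2*k) (i+2) (2*k-i-2) (by omega)]
      field_simp [fq]
      simp only [fs1 (i+1) i (by ring),
          fs2 (i+2) i (by ring),
          fs1 (i-k+1) (i-k) (by ring),
          fs1 (2*k-i) (2*k-i-1) (by omega),
          fs1 (2*k-i-1) (2*k-i-2) (by omega),
          fs1 k (k-1) (by omega),
          fs1 (j-k) (j-k-1) (by omega),
          fs1 (j+k+1) (j+k) (by ring),
          fs2 (2*k+2) (2*k) (by ring),
          fs2 (2*j+2*k+2) (2*j+2*k) (by ring)]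
      push_cast [Nat.cast_sub (show k ≤ i by omega),
        Nat.cast_sub (show i ≤ 2*k by omega),
        Nat.cast_sub (show 1 ≤ 2*k-i by omega),
        Nat.cast_sub (show 2 ≤ 2*k-i by omega),
        Nat.cast_sub (show 1 ≤ k by omega),
        Nat.cast_sub (show k ≤ j by omega),
        Nat.cast_sub (show 1 ≤ j-k by omega)]
      ring

private lemma key (i j : ℕ) : ∑ k ∈ range (i+2), Tq i j k
    = ((2*i).choose i : ℚ) * ((2*j).choose j : ℚ) * ((2*j+i).choose (2*i) : ℚ) := by
  induction i with
  | zero =>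
    rw [Finset.sum_range_succ, Finset.sum_range_succ, Finset.sum_range_zero,
        tq_zero 0 j 1 (by omega)]
    simp [Tq]
  | succ i ih =>
    by_cases h2j : 2*j ≤ i
    · have hz : ∀ k ∈ range (i+1+2), Tq (i+1) j k = 0 := by
        intro k _
        by_cases hk1 : i+1 < k
        · exact tq_zero _ _ _ hk1
        · by_cases hk2 : 2*k ≤ i
          · simp [Tq, Nat.choose_eq_zero_of_lt (show 2*k < i+1 by omega)]
          · simp [Tq, Nat.choose_eq_zero_of_lt (show j+k < 2*k by omega)]
      rw [Finset.sum_eq_zero hz,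
          Nat.choose_eq_zero_of_lt (show 2*j+(i+1) < 2*(i+1) by omega)]
      simp
    · push_neg at h2j
      have tele : ∑ k ∈ range (i+3), (Hq i j (k+1) - Hq i j k) = 0 := by
        rw [Finset.sum_range_sub (fun k => Hq i j k) (i+3)]
        have h0 : Hq i j 0 = 0 := by
          simp only [Hq]
          rw [Nat.choose_eq_zero_of_lt (show 2*0 < i+2 by omega)]
          push_cast; ring
        have h1 : Hq i j (i+3) = 0 := by
          simp only [Hq]
          rw [show i+3-1 = i+2 by omega,
              Nat.choose_eq_zero_of_lt (show i < i+2 by omega)]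
          push_cast; ring
        rw [h0, h1]; ring
      have eq1 : ∑ k ∈ range (i+3), (((i:ℚ)+1)^2 * Tq (i+1) j k
          - (2*(j:ℚ)+(i:ℚ)+1) * (2*(j:ℚ)-(i:ℚ)) * Tq i j k) = 0 := by
        rw [Finset.sum_congr rfl (fun k _ => cert i j k)]
        exact tele
      rw [Finset.sum_sub_distrib, ← Finset.mul_sum, ← Finset.mul_sum] at eq1
      have e2 : ∑ k ∈ range (i+3), Tq i j k = ∑ k ∈ range (i+2), Tq i j k := by
        rw [show i+3 = (i+2)+1 by ring, Finset.sum_range_succ,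
            tq_zero i j (i+2) (by omega), add_zero]
      rw [e2, ih] at eq1
      have step2 : ((i:ℚ)+1)^2 * (((2*(i+1)).choose (i+1) : ℚ) * ((2*j).choose j : ℚ)
            * ((2*j+(i+1)).choose (2*(i+1)) : ℚ))
          = (2*(j:ℚ)+(i:ℚ)+1) * (2*(j:ℚ)-(i:ℚ)) * (((2*i).choose i : ℚ)
            * ((2*j).choose j : ℚ) * ((2*j+i).choose (2*i) : ℚ)) := by
        rw [cc (2*(i+1)) (i+1) (i+1) (by ring),
            cc (2*j+(i+1)) (2*(i+1)) (2*j-i-1) (by omega),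
            cc (2*i) i i (by ring),
            cc (2*j+i) (2*i) (2*j-i) (by omega),
            cc (2*j) j j (by ring)]
        field_simp [fq]
        simp only [fs2 (2*(i+1)) (2*i) (by ring),
            fs1 (i+1) i (by ring),
            fs1 (2*j+(i+1)) (2*j+i) (by ring),
            fs1 (2*j-i) (2*j-i-1) (by omega)]
        push_cast [Nat.cast_sub (show i ≤ 2*j by omega),
          Nat.cast_sub (show 1 ≤ 2*j-i by omega)]
        ring
      have hne : ((i:ℚ)+1)^2 ≠ 0 := by positivity
      have final : ((i:ℚ)+1)^2 * (∑ k ∈ range (i+1+2), Tq (i+1) j k)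
          = ((i:ℚ)+1)^2 * (((2*(i+1)).choose (i+1) : ℚ) * ((2*j).choose j : ℚ)
            * ((2*j+(i+1)).choose (2*(i+1)) : ℚ)) := by
        rw [step2, show i+1+2 = i+3 by ring]
        linarith [eq1]
      exact mul_left_cancel₀ hne final

private lemma sum_Tq (i j N : ℕ) (h : i < N) :
    ∑ k ∈ range N, Tq i j k = ∑ k ∈ range (i+2), Tq i j k := by
  rcases le_total N (i+2) with hN | hN
  · refine Finset.sum_subset (Finset.range_subset_range.mpr hN) ?_
    intro k hk hk2
    simp only [Finset.mem_range] at hk hk2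
    exact tq_zero i j k (by omega)
  · refine (Finset.sum_subset (Finset.range_subset_range.mpr hN) ?_).symm
    intro k hk hk2
    simp only [Finset.mem_range] at hk hk2
    exact tq_zero i j k (by omega)

private lemma choose_cast_ne (a b : ℕ) (h : b ≤ a) : ((a.choose b : ℚ)) ≠ 0 := by
  have := Nat.choose_pos h
  positivity

private lemma diagU (j : ℕ) :
    (((2*j+2*j).choose (j+j) : ℚ) * ((j+j).choose (2*j) : ℚ)) / ((2*j).choose j : ℚ)
      = ((j.factorial : ℚ)^2 * ((4*j).factorial : ℚ)) / ((2*j).factorial : ℚ)^3 := by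
  rw [show j+j = 2*j by ring, Nat.choose_self (2*j), show 2*j+2*j = 4*j by ring]
  rw [cc (4*j) (2*j) (2*j) (by ring), cc (2*j) j j (by ring)]
  push_cast
  field_simp [fq]

theorem det_choose_2j_add_i_2j_sub_i (n : ℕ) :
    Matrix.det (Matrix.of fun i j : Fin n =>
        if (i : ℕ) ≤ 2 * (j : ℕ) then
          ((2 * (j : ℕ) + (i : ℕ)).choose (2 * (j : ℕ) - (i : ℕ)) : ℚ)
        else 0) =
      ∏ i ∈ Finset.range n,
        ((i.factorial : ℚ) ^ 2 * ((4 * i).factorial : ℚ) / ((2 * i).factorial : ℚ) ^ 3) := by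
  classical
  set Lm : Matrix (Fin n) (Fin n) ℚ := Matrix.of fun i k =>
    (((2*(k:ℕ)).choose (i:ℕ) : ℚ) * ((i:ℕ).choose (k:ℕ) : ℚ)) / ((2*(i:ℕ)).choose (i:ℕ) : ℚ)
    with hL
  set Um : Matrix (Fin n) (Fin n) ℚ := Matrix.of fun k j =>
    (((2*(j:ℕ)+2*(k:ℕ)).choose ((j:ℕ)+(k:ℕ)) : ℚ) * (((j:ℕ)+(k:ℕ)).choose (2*(k:ℕ)) : ℚ))
      / ((2*(j:ℕ)).choose (j:ℕ) : ℚ) with hU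
  have hprod : (Matrix.of fun i j : Fin n =>
      if (i : ℕ) ≤ 2 * (j : ℕ) then
        ((2 * (j : ℕ) + (i : ℕ)).choose (2 * (j : ℕ) - (i : ℕ)) : ℚ)
      else 0) = Lm * Um := by
    ext i j
    rw [Matrix.mul_apply]
    have hterm : ∀ k : Fin n, Lm i k * Um k j
        = Tq (i:ℕ) (j:ℕ) (k:ℕ)
          / (((2*(i:ℕ)).choose (i:ℕ) : ℚ) * ((2*(j:ℕ)).choose (j:ℕ) : ℚ)) := by
      intro k
      simp only [hL, hU, Matrix.of_apply, Tq]
      rw [div_mul_div_comm]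
      congr 1
      ring
    rw [Finset.sum_congr rfl (fun k _ => hterm k), ← Finset.sum_div]
    rw [Fin.sum_univ_eq_sum_range (fun k => Tq (i:ℕ) (j:ℕ) k) n]
    rw [sum_Tq (i:ℕ) (j:ℕ) n i.isLt, key]
    have hne : (((2*(i:ℕ)).choose (i:ℕ) : ℚ) * ((2*(j:ℕ)).choose (j:ℕ) : ℚ)) ≠ 0 :=
      mul_ne_zero (choose_cast_ne _ _ (by omega)) (choose_cast_ne _ _ (by omega))
    rw [mul_div_cancel_left₀ _ hne]
    simp only [Matrix.of_apply]
    split_ifs with hij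
    · have hsym : (2*(j:ℕ)+(i:ℕ)).choose (2*(j:ℕ)-(i:ℕ))
          = (2*(j:ℕ)+(i:ℕ)).choose (2*(i:ℕ)) := by
        rw [show 2*(j:ℕ)-(i:ℕ) = (2*(j:ℕ)+(i:ℕ)) - 2*(i:ℕ) by omega]
        exact Nat.choose_symm (by omega)
      rw [hsym]
    · rw [Nat.choose_eq_zero_of_lt (show 2*(j:ℕ)+(i:ℕ) < 2*(i:ℕ) by omega)]
      simp
  rw [hprod, Matrix.det_mul]
  have hdL : Lm.det = 1 := by
    have ht : ∀ i j : Fin n, i < j → Lm i j = 0 := by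
      intro i j hij
      simp only [hL, Matrix.of_apply]
      rw [Nat.choose_eq_zero_of_lt (show (i:ℕ) < (j:ℕ) from hij)]
      simp
    rw [Matrix.det_of_lowerTriangular Lm ht]
    refine Finset.prod_eq_one ?_
    intro i _
    simp only [hL, Matrix.of_apply, Nat.choose_self, Nat.cast_one, mul_one]
    exact div_self (choose_cast_ne _ _ (by omega))
  have hdU : Um.det = ∏ j : Fin n, Um j j := by
    refine Matrix.det_of_upperTriangular ?_
    intro k j hjk
    simp only [hU, Matrix.of_apply]
    rw [Nat.choose_eq_zero_of_lt (show (j:ℕ)+(k:ℕ) < 2*(k:ℕ) by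
      have : (j:ℕ) < (k:ℕ) := hjk
      omega)]
    simp
  rw [hdL, hdU, one_mul]
  have hcongr : ∀ j : Fin n, Um j j
      = ((((j:ℕ).factorial : ℚ))^2 * ((4*(j:ℕ)).factorial : ℚ))
        / (((2*(j:ℕ)).factorial : ℚ))^3 := by
    intro j
    simp only [hU, Matrix.of_apply]
    exact diagU (j:ℕ)
  rw [Finset.prod_congr rfl (fun j _ => hcongr j)]
  rw [Fin.prod_univ_eq_prod_range
    (fun j => (((j.factorial : ℚ))^2 * ((4*j).factorial : ℚ)) / (((2*j).factorial : ℚ))^3) n]
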